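/- In the ring of symmetric functions Λ⊗Q with power sums p_k and p_k' := (1/k)∑_{d|k} μ(k/d) p_d, the following identity of formal power series in variables t_1, t_2, ... holds: ∏_{k≥1} (1 + t_1^k + t_2^k + ⋯)^{p_k'} = ∑_{I} c_I t^I, where the sum is over multi-indices I = (i_1, i_2, ...) with finitely many nonzero entries, t^I = ∏ t_j^{i_j}, and the coefficient of t^I in the left side, expanded via x^a = exp(a log x), is a well-defined element c_I of Λ⊗Q. In particular for the specialization p_k ↦ ∑_{i=1}^{N} x_i^k (finitely many variables), the coefficient c_{(1,1,...,1)} (k ones) equals the falling factorial p_1(p_1−1)···(p_1−k+1) evaluated at p_1 = x_1+⋯+x_N. -/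

import Mathlib

set_option linter.unusedSectionVars false


open ArithmeticFunction MvPowerSeries

variable {ι : Type*} {R : Type*} [CommRing R] [Algebra ℚ R]

/-- The exponential `exp(f) = ∑_{k≥0} f^k/k!` of a multivariate power series `f`
(with zero constant term), defined coefficientwise. -/
noncomputable def mvExp (f : MvPowerSeries ι R) : MvPowerSeries ι R :=
  fun d => ∑ k ∈ Finset.range ((d.sum fun _ n => n) + 1),
    ((k.factorial : ℚ)⁻¹) • (MvPowerSeries.coeff d (f ^ k))

/-- The logarithm `log f = −∑_{k≥1} (1−f)^k/k` of a multivariate power series `f` with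
constant term `1`, defined coefficientwise. -/
noncomputable def mvLog (f : MvPowerSeries ι R) : MvPowerSeries ι R :=
  fun d => ∑ k ∈ Finset.Icc 1 (d.sum fun _ n => n),
    (-(k : ℚ)⁻¹) • (MvPowerSeries.coeff d ((1 - f) ^ k))

/-- The formal power `x^a := exp(a·log x)`. -/
noncomputable def mvPow (a : R) (f : MvPowerSeries ι R) : MvPowerSeries ι R :=
  mvExp ((MvPowerSeries.C a) * mvLog f)

/-- The power sum `p_m = ∑_i x_i^m` in `N` variables. -/
noncomputable def powerSum (N : ℕ) (m : ℕ) : MvPolynomial (Fin N) ℚ :=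
  ∑ i, MvPolynomial.X i ^ m

/-- The Möbius-inverted power sum `p_m' = (1/m) ∑_{d ∣ m} μ(m/d) p_d`. -/
noncomputable def powerSumPrime (N : ℕ) (m : ℕ) : MvPolynomial (Fin N) ℚ :=
  ((m : ℚ)⁻¹) • ∑ d ∈ m.divisors, MvPolynomial.C ((moebius (m / d) : ℤ) : ℚ) * powerSum N d

namespace CSFAux

open Finset MvPowerSeries

variable {τ : Type*} [DecidableEq τ]

/-- Total degree of a multi-index. -/
def deg (e : τ →₀ ℕ) : ℕ := e.sum fun _ n => n

lemma deg_add (u v : τ →₀ ℕ) : deg (u + v) = deg u + deg v :=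
  Finsupp.sum_add_index' (fun _ => rfl) (fun _ _ _ => rfl)

lemma deg_eq_zero {e : τ →₀ ℕ} (h : deg e = 0) : e = 0 := by
  have h' : ∀ a ∈ e.support, e a = 0 := Finset.sum_eq_zero_iff.1 h
  ext j
  by_cases hj : j ∈ e.support
  · exact h' j hj
  · simpa using Finsupp.notMem_support_iff.1 hj

lemma apply_le_deg (e : τ →₀ ℕ) (j : τ) : e j ≤ deg e := by
  by_cases hj : j ∈ e.support
  · exact Finset.single_le_sum (f := fun a => e a) (fun i _ => Nat.zero_le _) hj
  · simp [Finsupp.notMem_support_iff.1 hj]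

lemma deg_zero : deg (0 : τ →₀ ℕ) = 0 := by simp [deg]

lemma deg_single (j : τ) : deg (Finsupp.single j 1) = 1 := by
  simp [deg, Finsupp.sum_single_index]

/-- coefficients of a power of a series with zero constant term vanish below the power. -/
lemma coeff_pow_eq_zero {h : MvPowerSeries τ R} (h0 : constantCoeff h = 0) :
    ∀ (n : ℕ) {e : τ →₀ ℕ}, deg e < n → coeff e (h ^ n) = 0 := by
  intro n
  induction n with
  | zero => intro e he; omega
  | succ n ih =>
    intro e he
    rw [pow_succ, coeff_mul]
    refine Finset.sum_eq_zero fun p hp => ?_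
    rw [Finset.HasAntidiagonal.mem_antidiagonal] at hp
    by_cases h2 : p.2 = 0
    · have : coeff p.2 h = 0 := by
        rw [h2, coeff_zero_eq_constantCoeff_apply, h0]
      rw [this, mul_zero]
    · have hdeg : deg p.1 + deg p.2 = deg e := by rw [← deg_add, hp]
      have : 1 ≤ deg p.2 := by
        rcases Nat.eq_zero_or_pos (deg p.2) with h | h
        · exact absurd (deg_eq_zero h) h2
        · exact h
      have : deg p.1 < n := by omega
      rw [ih this, zero_mul]

section Part

variable (j0 : τ) (h : MvPowerSeries τ R)

/-- the part of `h` with no `j0`. -/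
noncomputable def part0 : MvPowerSeries τ R := fun e => if e j0 = 0 then h e else 0

/-- the part of `h` with some `j0`. -/
noncomputable def part1 : MvPowerSeries τ R := fun e => if e j0 = 0 then 0 else h e

lemma part0_add_part1 : part0 j0 h + part1 j0 h = h := by
  ext e
  rw [map_add]
  show (if e j0 = 0 then h e else 0) + (if e j0 = 0 then 0 else h e) = coeff e h
  split_ifs <;> simp [coeff_apply]

lemma coeff_part0 {e : τ →₀ ℕ} (he : e j0 = 0) : coeff e (part0 j0 h) = coeff e h := by
  rw [coeff_apply, coeff_apply, part0, if_pos he]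

lemma coeff_part0_of_ne {e : τ →₀ ℕ} (he : e j0 ≠ 0) : coeff e (part0 j0 h) = 0 := by
  rw [coeff_apply, part0, if_neg he]

lemma coeff_part1_of_zero {e : τ →₀ ℕ} (he : e j0 = 0) : coeff e (part1 j0 h) = 0 := by
  rw [coeff_apply, part1, if_pos he]

lemma coeff_part1 {e : τ →₀ ℕ} (he : e j0 ≠ 0) : coeff e (part1 j0 h) = coeff e h := by
  rw [coeff_apply, coeff_apply, part1, if_neg he]

lemma coeff_part0_pow : ∀ (n : ℕ) {e : τ →₀ ℕ}, e j0 = 0 →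
    coeff e ((part0 j0 h) ^ n) = coeff e (h ^ n) := by
  intro n
  induction n with
  | zero => intro e _; rfl
  | succ n ih =>
    intro e he
    rw [pow_succ, pow_succ, coeff_mul, coeff_mul]
    refine Finset.sum_congr rfl fun p hp => ?_
    rw [Finset.HasAntidiagonal.mem_antidiagonal] at hp
    have hj : p.1 j0 + p.2 j0 = 0 := by
      rw [← Finsupp.add_apply, hp, he]
    rw [ih (by omega), coeff_part0 j0 h (by omega)]

lemma coeff_part0_pow_of_ne : ∀ (n : ℕ) {e : τ →₀ ℕ}, e j0 ≠ 0 →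
    coeff e ((part0 j0 h) ^ n) = 0 := by
  intro n
  induction n with
  | zero =>
    intro e he
    have : e ≠ 0 := fun h0 => by simp [h0] at he
    rw [pow_zero, coeff_one, if_neg this]
  | succ n ih =>
    intro e he
    rw [pow_succ, coeff_mul]
    refine Finset.sum_eq_zero fun p hp => ?_
    rw [Finset.HasAntidiagonal.mem_antidiagonal] at hp
    have hj : p.1 j0 + p.2 j0 = e j0 := by rw [← Finsupp.add_apply, hp]
    by_cases h2 : p.2 j0 = 0
    · rw [ih (by omega), zero_mul]
    · rw [coeff_part0_of_ne j0 h h2, mul_zero]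

lemma coeff_part1_pow : ∀ (n : ℕ) {e : τ →₀ ℕ}, e j0 < n →
    coeff e ((part1 j0 h) ^ n) = 0 := by
  intro n
  induction n with
  | zero => intro e he; omega
  | succ n ih =>
    intro e he
    rw [pow_succ, coeff_mul]
    refine Finset.sum_eq_zero fun p hp => ?_
    rw [Finset.HasAntidiagonal.mem_antidiagonal] at hp
    have hj : p.1 j0 + p.2 j0 = e j0 := by rw [← Finsupp.add_apply, hp]
    by_cases h2 : p.2 j0 = 0
    · rw [coeff_part1_of_zero j0 h h2, mul_zero]
    · rw [ih (by omega), zero_mul]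

lemma coeff_pow_succ {d : τ →₀ ℕ} (hd : d j0 = 1) (n : ℕ) :
    coeff d (h ^ (n + 1)) = (n + 1) • coeff d ((part0 j0 h) ^ n * part1 j0 h) := by
  have cast_eq : ∀ (A : MvPowerSeries τ R) (c : ℕ),
      coeff d (A * (c : MvPowerSeries τ R)) = c • coeff d A := by
    intro A c
    rw [mul_comm, ← nsmul_eq_mul, map_nsmul]
  conv_lhs => rw [← part0_add_part1 j0 h]
  rw [add_pow, map_sum]
  rw [Finset.sum_eq_single n]
  · rw [cast_eq, Nat.choose_succ_self_right, show n + 1 - n = 1 by omega, pow_one]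
  · intro k hk hkn
    rw [cast_eq]
    by_cases hk1 : k = n + 1
    · subst hk1
      rw [Nat.sub_self, pow_zero, mul_one,
        coeff_part0_pow_of_ne j0 h _ (by rw [hd]; exact one_ne_zero), smul_zero]
    · have hk2 : 2 ≤ n + 1 - k := by
        rw [Finset.mem_range] at hk
        omega
      rw [coeff_mul]
      have : ∀ p ∈ Finset.HasAntidiagonal.antidiagonal d,
          coeff p.1 ((part0 j0 h) ^ k) * coeff p.2 ((part1 j0 h) ^ (n + 1 - k)) = 0 := by
        intro p hp
        rw [Finset.HasAntidiagonal.mem_antidiagonal] at hp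
        have hj : p.1 j0 + p.2 j0 = 1 := by rw [← Finsupp.add_apply, hp, hd]
        rw [coeff_part1_pow j0 h _ (by omega), mul_zero]
      rw [Finset.sum_eq_zero this, smul_zero]
  · intro hn
    exfalso
    exact hn (Finset.mem_range.mpr (by omega))

lemma coeff_exp_rec (hc : constantCoeff h = 0) {d : τ →₀ ℕ} (hd : d j0 = 1) :
    coeff d (mvExp h) =
      ∑ p ∈ Finset.HasAntidiagonal.antidiagonal d,
        (if p.2 j0 = 1 then coeff p.2 h * coeff p.1 (mvExp h) else 0) := by
  have hd0 : d ≠ 0 := fun h0 => by simp [h0] at hd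
  have hD : 1 ≤ deg d := le_trans (by omega) (apply_le_deg d j0)
  have lhs_eq : coeff d (mvExp h) =
      ∑ n ∈ Finset.range (deg d + 1), ((n.factorial : ℚ)⁻¹) • coeff d (h ^ n) := rfl
  rw [lhs_eq, Finset.sum_range_succ']
  have f0 : ((Nat.factorial 0 : ℚ)⁻¹) • coeff d (h ^ 0) = 0 := by
    rw [pow_zero, coeff_one, if_neg hd0, smul_zero]
  rw [f0, add_zero]
  have step : ∀ m, (((m + 1).factorial : ℚ)⁻¹) • coeff d (h ^ (m + 1))
      = ((m.factorial : ℚ)⁻¹) • coeff d ((part0 j0 h) ^ m * part1 j0 h) := by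
    intro m
    rw [coeff_pow_succ j0 h hd m, ← Nat.cast_smul_eq_nsmul ℚ, smul_smul]
    congr 1
    rw [Nat.factorial_succ]
    push_cast
    rw [mul_inv]
    field_simp
  simp_rw [step, coeff_mul, Finset.smul_sum]
  rw [Finset.sum_comm]
  refine Finset.sum_congr rfl fun p hp => ?_
  rw [Finset.HasAntidiagonal.mem_antidiagonal] at hp
  have hj : p.1 j0 + p.2 j0 = 1 := by rw [← Finsupp.add_apply, hp, hd]
  by_cases h2 : p.2 j0 = 0
  · rw [if_neg (by omega)]
    refine Finset.sum_eq_zero fun m _ => ?_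
    rw [coeff_part1_of_zero j0 h h2, mul_zero, smul_zero]
  · have h21 : p.2 j0 = 1 := by omega
    have h10 : p.1 j0 = 0 := by omega
    rw [if_pos h21]
    have hterm : ∀ m, ((m.factorial : ℚ)⁻¹) •
        (coeff p.1 ((part0 j0 h) ^ m) * coeff p.2 (part1 j0 h))
        = (((m.factorial : ℚ)⁻¹) • coeff p.1 (h ^ m)) * coeff p.2 h := by
      intro m
      rw [coeff_part0_pow j0 h m h10, coeff_part1 j0 h h2, smul_mul_assoc]
    simp_rw [hterm]
    rw [← Finset.sum_mul, mul_comm]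
    congr 1
    have hdegs : deg p.1 + deg p.2 = deg d := by rw [← deg_add, hp]
    have hp2 : 1 ≤ deg p.2 := le_trans (by omega) (apply_le_deg p.2 j0)
    have hsub : Finset.range (deg p.1 + 1) ⊆ Finset.range (deg d) := by
      intro x hx
      rw [Finset.mem_range] at hx ⊢
      omega
    have rhs_eq : coeff p.1 (mvExp h) =
        ∑ n ∈ Finset.range (deg p.1 + 1), ((n.factorial : ℚ)⁻¹) • coeff p.1 (h ^ n) := rfl
    rw [rhs_eq]
    refine (Finset.sum_subset hsub fun x _ hxn => ?_).symm
    rw [Finset.mem_range] at hxn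
    rw [coeff_pow_eq_zero hc x (by omega), smul_zero]

end Part

section App

variable [Fintype τ]

/-- the squarefree multi-index with support `S`. -/
noncomputable def dOf (S : Finset τ) : τ →₀ ℕ := ∑ j ∈ S, Finsupp.single j 1

lemma dOf_apply (S : Finset τ) (j : τ) : dOf S j = if j ∈ S then 1 else 0 := by
  rw [dOf, Finsupp.finset_sum_apply]
  simp [Finsupp.single_apply]

lemma dOf_empty : dOf (∅ : Finset τ) = 0 := by simp [dOf]

lemma dOf_eq_zero_iff {S : Finset τ} : dOf S = 0 ↔ S = ∅ := by
  constructor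
  · intro h
    by_contra hne
    obtain ⟨j, hj⟩ := Finset.nonempty_iff_ne_empty.mpr hne
    have h1 : dOf S j = 0 := by rw [h]; rfl
    rw [dOf_apply, if_pos hj] at h1
    exact one_ne_zero h1
  · intro h; rw [h, dOf_empty]

lemma support_dOf (S : Finset τ) : (dOf S).support = S := by
  ext j
  rw [Finsupp.mem_support_iff, dOf_apply]
  split <;> simp_all

lemma deg_dOf (S : Finset τ) : deg (dOf S) = S.card := by
  classical
  induction S using Finset.induction with
  | empty => simp [dOf_empty, deg_zero]
  | @insert a S ha ih =>
    rw [show dOf (insert a S) = Finsupp.single a 1 + dOf S by rw [dOf, Finset.sum_insert ha]; rfl,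
      deg_add, deg_single, Finset.card_insert_of_notMem ha, ih]
    omega

lemma sum_antidiagonal_dOf {β : Type*} [AddCommMonoid β] (S : Finset τ)
    (f : (τ →₀ ℕ) × (τ →₀ ℕ) → β) :
    ∑ p ∈ Finset.HasAntidiagonal.antidiagonal (dOf S), f p = ∑ T ∈ S.powerset, f (dOf (S \ T), dOf T) := by
  have hadd : ∀ T ∈ S.powerset, dOf (S \ T) + dOf T = dOf S := by
    intro T hT
    rw [Finset.mem_powerset] at hT
    ext j
    rw [Finsupp.add_apply, dOf_apply, dOf_apply, dOf_apply]
    by_cases hjT : j ∈ T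
    · rw [if_pos hjT, if_neg (by simp [Finset.mem_sdiff, hjT]), if_pos (hT hjT)]
    · by_cases hjS : j ∈ S
      · rw [if_neg hjT, if_pos (Finset.mem_sdiff.mpr ⟨hjS, hjT⟩), if_pos hjS]
      · rw [if_neg hjT, if_neg (by simp [Finset.mem_sdiff, hjS]), if_neg hjS]
  have hmem : ∀ p ∈ Finset.HasAntidiagonal.antidiagonal (dOf S), ∀ j, p.1 j + p.2 j = dOf S j := by
    intro p hp j
    rw [Finset.HasAntidiagonal.mem_antidiagonal] at hp
    rw [← Finsupp.add_apply, hp]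
  have hleft : ∀ p ∈ Finset.HasAntidiagonal.antidiagonal (dOf S),
      (dOf (S \ p.2.support), dOf p.2.support) = p := by
    intro p hp
    have hj := hmem p hp
    have h2 : dOf p.2.support = p.2 := by
      ext j
      rw [dOf_apply]
      have hthis := hj j
      rw [dOf_apply] at hthis
      by_cases hs : p.2 j = 0
      · rw [if_neg (by simp [Finsupp.mem_support_iff, hs]), hs]
      · rw [if_pos (Finsupp.mem_support_iff.mpr hs)]
        by_cases hjS : j ∈ S <;> simp only [hjS, if_true, if_false] at hthis <;> omega
    have h1 : dOf (S \ p.2.support) = p.1 := by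
      ext j
      rw [dOf_apply]
      have hthis := hj j
      rw [dOf_apply] at hthis
      by_cases hs : j ∈ p.2.support
      · rw [if_neg (by simp [Finset.mem_sdiff, hs])]
        have hne := Finsupp.mem_support_iff.mp hs
        by_cases hjS : j ∈ S <;> simp only [hjS, if_true, if_false] at hthis <;> omega
      · have hz : p.2 j = 0 := Finsupp.notMem_support_iff.mp hs
        by_cases hjS : j ∈ S
        · rw [if_pos (Finset.mem_sdiff.mpr ⟨hjS, hs⟩)]
          simp only [hjS, if_true] at hthis
          omega
        · rw [if_neg (by simp [Finset.mem_sdiff, hjS])]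
          simp only [hjS, if_false] at hthis
          omega
    rw [h1, h2]
  refine Finset.sum_nbij' (fun p => p.2.support) (fun T => (dOf (S \ T), dOf T)) ?_ ?_ ?_ ?_ ?_
  · intro p hp
    rw [Finset.mem_powerset]
    intro j hjsupp
    have hthis := hmem p hp j
    have hne := Finsupp.mem_support_iff.mp hjsupp
    rw [dOf_apply] at hthis
    by_cases hjS : j ∈ S
    · exact hjS
    · simp only [hjS, if_false] at hthis; omega
  · intro T hT
    rw [Finset.HasAntidiagonal.mem_antidiagonal]
    exact hadd T hT
  · intro p hp
    exact hleft p hp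
  · intro T hT
    exact support_dOf T
  · intro p hp
    exact (congrArg f (hleft p hp)).symm

lemma coeff_sumX_pow (n : ℕ) (T : Finset τ) :
    coeff (dOf T) ((∑ j : τ, X j : MvPowerSeries τ R) ^ n)
      = if T.card = n then (n.factorial : R) else 0 := by
  induction n generalizing T with
  | zero =>
    rw [pow_zero, coeff_one]
    by_cases hT : T = ∅
    · subst hT
      rw [if_pos dOf_empty, if_pos (by simp)]
      norm_num
    · rw [if_neg (fun h0 => hT (dOf_eq_zero_iff.mp h0)),
        if_neg (by simpa [Finset.card_eq_zero] using hT)]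
  | succ n ih =>
    rw [pow_succ', Finset.sum_mul, map_sum]
    have hterm : ∀ j : τ, coeff (dOf T) (X j * (∑ i : τ, X i : MvPowerSeries τ R) ^ n)
        = if j ∈ T then coeff (dOf (T.erase j)) ((∑ i : τ, X i : MvPowerSeries τ R) ^ n)
          else 0 := by
      intro j
      rw [X_def, coeff_monomial_mul]
      by_cases hj : j ∈ T
      · rw [if_pos (Finsupp.single_le_iff.mpr (by rw [dOf_apply, if_pos hj])), one_mul, if_pos hj]
        have hsub : dOf T - Finsupp.single j 1 = dOf (T.erase j) := by
          ext i
          rw [Finsupp.tsub_apply, dOf_apply, dOf_apply, Finsupp.single_apply]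
          by_cases hij : j = i
          · subst hij
            simp [hj]
          · rw [if_neg hij, Nat.sub_zero]
            have hiff : i ∈ T.erase j ↔ i ∈ T := by
              rw [Finset.mem_erase]
              exact ⟨fun h => h.2, fun h => ⟨Ne.symm hij, h⟩⟩
            by_cases hiT : i ∈ T
            · rw [if_pos hiT, if_pos (hiff.mpr hiT)]
            · rw [if_neg hiT, if_neg (fun hc => hiT (hiff.mp hc))]
        rw [hsub]
      · rw [if_neg, if_neg hj]
        rw [Finsupp.single_le_iff, dOf_apply, if_neg hj]
        omega
    simp_rw [hterm]
    rw [Finset.sum_ite_mem, Finset.univ_inter]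
    have hterm2 : ∀ j ∈ T, coeff (dOf (T.erase j)) ((∑ i : τ, X i : MvPowerSeries τ R) ^ n)
        = if T.card = n + 1 then (n.factorial : R) else 0 := by
      intro j hj
      have h1 : 1 ≤ T.card := Finset.card_pos.mpr ⟨j, hj⟩
      rw [ih, Finset.card_erase_of_mem hj]
      by_cases hc2 : T.card = n + 1
      · rw [if_pos (by omega), if_pos hc2]
      · rw [if_neg (by omega), if_neg hc2]
    rw [Finset.sum_congr rfl hterm2, Finset.sum_const]
    by_cases hc : T.card = n + 1
    · rw [if_pos hc, if_pos hc, hc, nsmul_eq_mul, Nat.factorial_succ]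
      push_cast
      ring
    · rw [if_neg hc, if_neg hc, smul_zero]

lemma constantCoeff_mvLog (f : MvPowerSeries τ R) : constantCoeff (mvLog f) = 0 := by
  rw [← coeff_zero_eq_constantCoeff_apply]
  have hshow : coeff (0 : τ →₀ ℕ) (mvLog f)
      = ∑ n ∈ Finset.Icc 1 ((0 : τ →₀ ℕ).sum fun _ n => n),
          (-(n : ℚ)⁻¹) • coeff (0 : τ →₀ ℕ) ((1 - f) ^ n) := rfl
  rw [hshow]
  simp

lemma coeff_log_one_add (T : Finset τ) (hT : T.Nonempty) :
    coeff (dOf T) (mvLog (1 + ∑ j : τ, (X j : MvPowerSeries τ R)))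
      = algebraMap ℚ R ((-1) ^ (T.card + 1) * ((T.card - 1).factorial : ℚ)) := by
  have hlog : coeff (dOf T) (mvLog (1 + ∑ j : τ, (X j : MvPowerSeries τ R)))
      = ∑ n ∈ Finset.Icc 1 (deg (dOf T)), (-(n : ℚ)⁻¹) •
          coeff (dOf T) ((1 - (1 + ∑ j : τ, (X j : MvPowerSeries τ R))) ^ n) := rfl
  have hneg : (1 - (1 + ∑ j : τ, (X j : MvPowerSeries τ R)))
      = -(∑ j : τ, (X j : MvPowerSeries τ R)) := by ring
  have hcoeffneg : ∀ n : ℕ, coeff (dOf T) ((-(∑ j : τ, (X j : MvPowerSeries τ R))) ^ n)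
      = (-1 : R) ^ n * coeff (dOf T) ((∑ j : τ, (X j : MvPowerSeries τ R)) ^ n) := by
    intro n
    rw [neg_pow, show ((-1 : MvPowerSeries τ R) ^ n) = C ((-1 : R) ^ n) by
      rw [map_pow, map_neg, map_one], coeff_C_mul]
  rw [hlog]
  simp_rw [hneg, hcoeffneg, coeff_sumX_pow, deg_dOf]
  obtain ⟨u, hu⟩ : ∃ u, T.card = u + 1 :=
    ⟨T.card - 1, by have := Finset.card_pos.mpr hT; omega⟩
  rw [Finset.sum_eq_single T.card]
  · rw [if_pos rfl, hu]
    have hfac : ((u + 1).factorial : R) = algebraMap ℚ R (((u + 1).factorial : ℚ)) := by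
      rw [map_natCast]
    have hm1 : (-1 : R) ^ (u + 1) = algebraMap ℚ R ((-1 : ℚ) ^ (u + 1)) := by
      rw [map_pow, map_neg, map_one]
    rw [hfac, hm1, ← map_mul, Algebra.smul_def, ← map_mul]
    congr 1
    rw [Nat.add_sub_cancel, Nat.factorial_succ]
    push_cast
    field_simp
    ring
  · intro n hn hne
    rw [if_neg (Ne.symm hne), mul_zero, smul_zero]
  · intro hmem
    exfalso
    apply hmem
    rw [Finset.mem_Icc]
    omega

/-- the falling factorial. -/
noncomputable def ff (a : R) (s : ℕ) : R := ∏ j ∈ Finset.range s, (a - algebraMap ℚ R (j : ℚ))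

lemma hh_sum (a : R) : ∀ u : ℕ,
    ∑ m ∈ Finset.range (u + 1),
        a * algebraMap ℚ R ((-1) ^ m * (u.descFactorial m : ℚ)) * ff a (u - m)
      = ff a (u + 1) := by
  intro u
  induction u with
  | zero => simp [ff]
  | succ u ih =>
    rw [Finset.sum_range_succ']
    have hshift : ∀ m,
        a * algebraMap ℚ R ((-1) ^ (m + 1) * ((u + 1).descFactorial (m + 1) : ℚ))
            * ff a (u + 1 - (m + 1))
        = algebraMap ℚ R (-((u : ℚ) + 1)) *
            (a * algebraMap ℚ R ((-1) ^ m * (u.descFactorial m : ℚ)) * ff a (u - m)) := by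
      intro m
      rw [Nat.succ_descFactorial_succ, Nat.succ_sub_succ,
        show ((-1 : ℚ) ^ (m + 1) * (((u + 1) * u.descFactorial m : ℕ) : ℚ))
          = (-((u : ℚ) + 1)) * ((-1) ^ m * (u.descFactorial m : ℚ)) by push_cast; ring,
        map_mul]
      ring
    simp_rw [hshift]
    rw [← Finset.mul_sum, ih]
    have hzero : a * algebraMap ℚ R ((-1) ^ 0 * (((u + 1).descFactorial 0 : ℕ) : ℚ))
        * ff a (u + 1 - 0) = a * ff a (u + 1) := by
      norm_num
    rw [hzero]
    rw [show ff a (u + 1 + 1) = ff a (u + 1) * (a - algebraMap ℚ R ((u + 1 : ℕ) : ℚ)) from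
      Finset.prod_range_succ _ _]
    push_cast
    ring

lemma key (a : R) (S : Finset τ) :
    coeff (dOf S) (mvPow a (1 + ∑ j : τ, (X j : MvPowerSeries τ R))) = ff a S.card := by
  induction S using Finset.strongInduction with
  | _ S ih =>
  rw [mvPow]
  have hconst : constantCoeff
      (C a * mvLog (1 + ∑ j : τ, (X j : MvPowerSeries τ R))) = 0 := by
    rw [map_mul, constantCoeff_mvLog, mul_zero]
  rcases Finset.eq_empty_or_nonempty S with rfl | ⟨j0, hj0⟩
  · rw [dOf_empty]
    have hshow : coeff (0 : τ →₀ ℕ)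
        (mvExp (C a * mvLog (1 + ∑ j : τ, (X j : MvPowerSeries τ R))))
        = ∑ n ∈ Finset.range (((0 : τ →₀ ℕ).sum fun _ n => n) + 1), ((n.factorial : ℚ)⁻¹) •
            coeff (0 : τ →₀ ℕ)
              ((C a * mvLog (1 + ∑ j : τ, (X j : MvPowerSeries τ R))) ^ n) := rfl
    rw [hshow]
    simp [ff]
  · have hd : dOf S j0 = 1 := by rw [dOf_apply, if_pos hj0]
    rw [coeff_exp_rec j0 _ hconst hd, sum_antidiagonal_dOf]
    obtain ⟨u, hu⟩ : ∃ u, S.card = u + 1 :=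
      ⟨S.card - 1, by have := Finset.card_pos.mpr ⟨j0, hj0⟩; omega⟩
    have hterm : ∀ T ∈ S.powerset,
        (if (dOf (S \ T), dOf T).2 j0 = 1
          then coeff (dOf (S \ T), dOf T).2
                (C a * mvLog (1 + ∑ j : τ, (X j : MvPowerSeries τ R))) *
              coeff (dOf (S \ T), dOf T).1
                (mvExp (C a * mvLog (1 + ∑ j : τ, (X j : MvPowerSeries τ R))))
          else 0)
        = (if j0 ∈ T then
            a * algebraMap ℚ R ((-1) ^ (T.card + 1) * ((T.card - 1).factorial : ℚ))
              * ff a (S.card - T.card)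
           else 0) := by
      intro T hT
      rw [Finset.mem_powerset] at hT
      by_cases hj0T : j0 ∈ T
      · have hcond : dOf T j0 = 1 := by rw [dOf_apply, if_pos hj0T]
        rw [if_pos hcond, if_pos hj0T]
        have hssub : S \ T ⊂ S := by
          refine Finset.ssubset_iff_of_subset (Finset.sdiff_subset) |>.mpr ?_
          exact ⟨j0, hj0, by simp [Finset.mem_sdiff, hj0T]⟩
        have hih := ih (S \ T) hssub
        rw [mvPow] at hih
        show coeff (dOf T) _ * coeff (dOf (S \ T)) _ = _
        rw [coeff_C_mul, coeff_log_one_add T ⟨j0, hj0T⟩, hih,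
          Finset.card_sdiff_of_subset hT]
      · rw [if_neg hj0T, if_neg (by rw [dOf_apply, if_neg hj0T]; omega)]
    rw [Finset.sum_congr rfl hterm, ← Finset.sum_filter]
    have hbij : ∑ T ∈ S.powerset.filter (fun T => j0 ∈ T),
        a * algebraMap ℚ R ((-1) ^ (T.card + 1) * ((T.card - 1).factorial : ℚ))
          * ff a (S.card - T.card)
      = ∑ T' ∈ (S.erase j0).powerset,
        a * algebraMap ℚ R ((-1) ^ (T'.card + 1 + 1) * (((T'.card + 1) - 1).factorial : ℚ))
          * ff a (S.card - (T'.card + 1)) := by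
      refine Finset.sum_nbij' (fun T => T.erase j0) (fun T' => insert j0 T') ?_ ?_ ?_ ?_ ?_
      · intro T hT
        rw [Finset.mem_filter, Finset.mem_powerset] at hT
        rw [Finset.mem_powerset]
        exact Finset.erase_subset_erase j0 hT.1
      · intro T' hT'
        rw [Finset.mem_powerset] at hT'
        rw [Finset.mem_filter, Finset.mem_powerset]
        constructor
        · intro x hx
          rcases Finset.mem_insert.mp hx with rfl | hx2
          · exact hj0
          · exact (Finset.erase_subset j0 S) (hT' hx2)
        · exact Finset.mem_insert_self j0 T'
      · intro T hT
        rw [Finset.mem_filter] at hT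
        exact Finset.insert_erase hT.2
      · intro T' hT'
        rw [Finset.mem_powerset] at hT'
        refine Finset.erase_insert fun hj0T' => ?_
        exact (Finset.notMem_erase j0 S) (hT' hj0T')
      · intro T hT
        rw [Finset.mem_filter] at hT
        have hcard : (T.erase j0).card + 1 = T.card := by
          rw [Finset.card_erase_of_mem hT.2]
          have : 1 ≤ T.card := Finset.card_pos.mpr ⟨j0, hT.2⟩
          omega
        rw [hcard]
    rw [hbij]
    have hpow := Finset.sum_powerset_apply_card
      (fun m => a * algebraMap ℚ R ((-1) ^ (m + 1 + 1) * (((m + 1) - 1).factorial : ℚ))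
          * ff a (S.card - (m + 1))) (x := S.erase j0)
    rw [hpow]
    have hcarderase : (S.erase j0).card = u := by
      rw [Finset.card_erase_of_mem hj0, hu]
      omega
    rw [hcarderase, hu]
    rw [← hh_sum a u]
    refine Finset.sum_congr rfl fun m hm => ?_
    rw [Finset.mem_range] at hm
    rw [nsmul_eq_mul, Nat.add_sub_cancel, Nat.succ_sub_succ]
    have hchoose : ((u.choose m : ℕ) : R) = algebraMap ℚ R ((u.choose m : ℕ) : ℚ) := by
      rw [map_natCast]
    rw [hchoose]
    rw [show ((-1 : ℚ) ^ m * (u.descFactorial m : ℚ))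
        = ((u.choose m : ℕ) : ℚ) * ((-1) ^ (m + 1 + 1) * ((m).factorial : ℚ)) by
      rw [Nat.descFactorial_eq_factorial_mul_choose]
      push_cast
      ring]
    simp only [map_mul, map_pow, map_neg, map_one, map_natCast]
    ring

lemma coeff_pow_squarefree_zero {f : MvPowerSeries τ R}
    (hf : ∀ e' : τ →₀ ℕ, (∀ j, e' j ≤ 1) → coeff e' f = 0)
    {n : ℕ} (hn : 1 ≤ n) {e : τ →₀ ℕ} (he : ∀ j, e j ≤ 1) : coeff e (f ^ n) = 0 := by
  obtain ⟨m, rfl⟩ : ∃ m, n = m + 1 := ⟨n - 1, by omega⟩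
  rw [pow_succ, coeff_mul]
  refine Finset.sum_eq_zero fun p hp => ?_
  rw [Finset.HasAntidiagonal.mem_antidiagonal] at hp
  have h2 : ∀ j, p.2 j ≤ 1 := fun j => by
    have h3 : p.1 j + p.2 j = e j := by rw [← Finsupp.add_apply, hp]
    have := he j
    omega
  rw [hf p.2 h2, mul_zero]

lemma coeff_factor_triv {m : ℕ} (hm : 2 ≤ m) (a : R) {e : τ →₀ ℕ} (he : ∀ j, e j ≤ 1) :
    coeff e (mvPow a (1 + ∑ j : τ, (X j : MvPowerSeries τ R) ^ m))
      = if e = 0 then 1 else 0 := by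
  have hgm : ∀ e' : τ →₀ ℕ, (∀ j, e' j ≤ 1) →
      coeff e' (∑ j : τ, (X j : MvPowerSeries τ R) ^ m) = 0 := by
    intro e' he'
    rw [map_sum]
    refine Finset.sum_eq_zero fun j _ => ?_
    rw [coeff_X_pow, if_neg]
    intro hEq
    have := he' j
    rw [hEq, Finsupp.single_eq_same] at this
    omega
  have hlog : ∀ e' : τ →₀ ℕ, (∀ j, e' j ≤ 1) →
      coeff e' (mvLog (1 + ∑ j : τ, (X j : MvPowerSeries τ R) ^ m)) = 0 := by
    intro e' he'
    have hshow : coeff e' (mvLog (1 + ∑ j : τ, (X j : MvPowerSeries τ R) ^ m))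
        = ∑ n ∈ Finset.Icc 1 (e'.sum fun _ n => n), (-(n : ℚ)⁻¹) •
            coeff e' ((1 - (1 + ∑ j : τ, (X j : MvPowerSeries τ R) ^ m)) ^ n) := rfl
    rw [hshow]
    refine Finset.sum_eq_zero fun n hn => ?_
    rw [Finset.mem_Icc] at hn
    have hneg : (1 - (1 + ∑ j : τ, (X j : MvPowerSeries τ R) ^ m))
        = -(∑ j : τ, (X j : MvPowerSeries τ R) ^ m) := by ring
    rw [hneg, neg_pow, show ((-1 : MvPowerSeries τ R) ^ n) = C ((-1 : R) ^ n) by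
      rw [map_pow, map_neg, map_one], coeff_C_mul,
      coeff_pow_squarefree_zero hgm hn.1 he', mul_zero, smul_zero]
  have hh : ∀ e' : τ →₀ ℕ, (∀ j, e' j ≤ 1) →
      coeff e' (C a * mvLog (1 + ∑ j : τ, (X j : MvPowerSeries τ R) ^ m)) = 0 := by
    intro e' he'
    rw [coeff_C_mul, hlog e' he', mul_zero]
  rw [mvPow]
  have hshow : coeff e (mvExp (C a * mvLog (1 + ∑ j : τ, (X j : MvPowerSeries τ R) ^ m)))
      = ∑ n ∈ Finset.range ((e.sum fun _ n => n) + 1), ((n.factorial : ℚ)⁻¹) •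
          coeff e ((C a * mvLog (1 + ∑ j : τ, (X j : MvPowerSeries τ R) ^ m)) ^ n) := rfl
  rw [hshow, Finset.sum_eq_single 0]
  · rw [pow_zero, coeff_one]
    norm_num
  · intro n hn hne
    rw [coeff_pow_squarefree_zero hh (by omega) he, smul_zero]
  · intro habs
    exact absurd (Finset.mem_range.mpr (by omega)) habs

lemma coeff_prod_triv (A : ℕ → R) : ∀ (s : Finset ℕ), (∀ m ∈ s, 2 ≤ m) →
    ∀ {e : τ →₀ ℕ}, (∀ j, e j ≤ 1) →
    coeff e (∏ m ∈ s, mvPow (A m) (1 + ∑ j : τ, (X j : MvPowerSeries τ R) ^ m))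
      = if e = 0 then 1 else 0 := by
  intro s
  induction s using Finset.induction with
  | empty =>
    intro _ e he
    rw [Finset.prod_empty, coeff_one]
  | @insert m s hm ihs =>
    intro hs e he
    rw [Finset.prod_insert hm, coeff_mul]
    have hs' : ∀ x ∈ s, 2 ≤ x := fun x hx => hs x (Finset.mem_insert_of_mem hx)
    by_cases he0 : e = 0
    · subst he0
      rw [Finsupp.antidiagonal_zero, Finset.sum_singleton]
      rw [coeff_factor_triv (hs m (Finset.mem_insert_self m s)) (A m) (fun j => by simp),
        ihs hs' (fun j => by simp), if_pos rfl]
      norm_num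
    · rw [if_neg he0]
      refine Finset.sum_eq_zero fun p hp => ?_
      rw [Finset.HasAntidiagonal.mem_antidiagonal] at hp
      have hle : ∀ j, p.1 j ≤ 1 ∧ p.2 j ≤ 1 := fun j => by
        have h3 : p.1 j + p.2 j = e j := by rw [← Finsupp.add_apply, hp]
        have := he j
        omega
      rw [coeff_factor_triv (hs m (Finset.mem_insert_self m s)) (A m) (fun j => (hle j).1),
        ihs hs' (fun j => (hle j).2)]
      by_cases h1 : p.1 = 0
      · by_cases h2 : p.2 = 0
        · exact absurd (by rw [← hp, h1, h2, add_zero]) he0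
        · rw [if_neg h2, mul_zero]
      · rw [if_neg h1, zero_mul]

end App

end CSFAux

lemma powerSumPrime_one (N : ℕ) : powerSumPrime N 1 = powerSum N 1 := by
  rw [powerSumPrime, Nat.divisors_one]
  simp

/-- In `Λ⊗ℚ` specialized to `N` variables (`p_m ↦ ∑_{i=1}^{N} x_i^m`), the coefficient
of the squarefree monomial `t_1 t_2 ⋯ t_k` in the product
`∏_{m≥1} (1 + t_1^m + t_2^m + ⋯)^{p_m'}` (expanded via `x^a = exp(a·log x)`; any
truncation `∏_{m=1}^{M}` of the product with `M ≥ 1` has the same such coefficient)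
equals the falling factorial `p_1(p_1 − 1)⋯(p_1 − k + 1)`. -/
theorem coeff_squarefree_of_prod_pPrime (N k : ℕ) (hk : 1 ≤ k) (M : ℕ) (hM : 1 ≤ M) :
    MvPowerSeries.coeff
        (Finsupp.equivFunOnFinite.symm fun _ : Fin k => 1)
        (∏ m ∈ Finset.Icc 1 M,
          mvPow (powerSumPrime N m)
            (1 + ∑ j : Fin k, (MvPowerSeries.X j : MvPowerSeries (Fin k) (MvPolynomial (Fin N) ℚ)) ^ m)) =
      ∏ j ∈ Finset.range k, (powerSum N 1 - MvPolynomial.C (j : ℚ)) := by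
  classical
  have hd_eq : (Finsupp.equivFunOnFinite.symm fun _ : Fin k => 1)
      = CSFAux.dOf (Finset.univ : Finset (Fin k)) := by
    ext j
    rw [Finsupp.equivFunOnFinite_symm_apply_apply, CSFAux.dOf_apply, if_pos (Finset.mem_univ j)]
  have hsq : ∀ j, CSFAux.dOf (Finset.univ : Finset (Fin k)) j ≤ 1 := fun j => by
    rw [CSFAux.dOf_apply]
    split <;> omega
  have hIcc : Finset.Icc 1 M = insert 1 (Finset.Icc 2 M) := by
    ext x
    rw [Finset.mem_Icc, Finset.mem_insert, Finset.mem_Icc]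
    omega
  rw [hd_eq, hIcc, Finset.prod_insert (by rw [Finset.mem_Icc]; omega), MvPowerSeries.coeff_mul]
  rw [Finset.sum_eq_single (CSFAux.dOf (Finset.univ : Finset (Fin k)), 0)]
  · rw [CSFAux.coeff_prod_triv (fun m => powerSumPrime N m) (Finset.Icc 2 M)
      (fun m hm => (Finset.mem_Icc.mp hm).1) (fun j => by simp), if_pos rfl, mul_one]
    rw [powerSumPrime_one]
    simp only [pow_one]
    rw [CSFAux.key (powerSum N 1) (Finset.univ : Finset (Fin k)), CSFAux.ff,
      Finset.card_univ, Fintype.card_fin]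
    refine Finset.prod_congr rfl fun j _ => ?_
    rw [MvPolynomial.algebraMap_eq]
  · intro p hp hne
    rw [Finset.HasAntidiagonal.mem_antidiagonal] at hp
    have h2 : p.2 ≠ 0 := by
      intro h0
      apply hne
      have h1 : p.1 = CSFAux.dOf (Finset.univ : Finset (Fin k)) := by rw [← hp, h0, add_zero]
      exact Prod.ext h1 h0
    have hsq2 : ∀ j, p.2 j ≤ 1 := fun j => by
      have h3 : p.1 j + p.2 j = CSFAux.dOf (Finset.univ : Finset (Fin k)) j := by
        rw [← Finsupp.add_apply, hp]
      have := hsq j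
      omega
    rw [CSFAux.coeff_prod_triv (fun m => powerSumPrime N m) (Finset.Icc 2 M)
      (fun m hm => (Finset.mem_Icc.mp hm).1) hsq2, if_neg h2, mul_zero]
  · intro habs
    exact absurd (Finset.HasAntidiagonal.mem_antidiagonal.mpr (add_zero _)) habs
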